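/- Let D ⊂ ℝ^d be compact and convex with non-empty interior, μ a probability measure with support D, and V an N-dimensional subspace of L²_μ(D) with orthonormal basis v_1, …, v_N of twice continuously differentiable functions, with R_μ(V) := sup_{x∈D}(Σ_i ‖∇v_i(x)‖²)^{1/2} finite. Fix k > 2 and r > 1, and let 𝒩 ⊂ D be a (k R_μ(V))^{-1}-covering of D (i.e., D ⊆ ∪_{y∈𝒩} B_η(y) with η = (k R_μ(V))^{-1}) with |𝒩| ≥ N. Let α be the measure-density constant of D at scale η, i.e., a constant with vol(B_s(x) ∩ D) ≥ α · vol(B_s(x)) for all x ∈ D and 0 < s ≤ η. If 𝒜 consists of M ≥ α^{-1}(r+1)|𝒩| log|𝒩| i.i.d. samples from the uniform probability measure on D, then with probability at least 1 − N^{-r}, every v ∈ V satisfies ‖v‖_∞ ≤ (k/(k−2)) · ‖v‖_{∞,𝒜}. -/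

import Mathlib

open MeasureTheory ProbabilityTheory Metric
open scoped BigOperators ENNReal


lemma aux_cs {ι : Type*} [Fintype ι] {E : Type*} [NormedAddCommGroup E] [NormedSpace ℝ E]
    (c : ι → ℝ) (f : ι → E) :
    ‖∑ i, c i • f i‖ ≤ Real.sqrt (∑ i, c i ^ 2) * Real.sqrt (∑ i, ‖f i‖ ^ 2) := by
  have h1 : ‖∑ i, c i • f i‖ ≤ ∑ i, |c i| * ‖f i‖ :=
    le_trans (norm_sum_le _ _) (le_of_eq (by simp [norm_smul]))
  have h2 : (∑ i, |c i| * ‖f i‖) ^ 2 ≤ (∑ i, c i ^ 2) * (∑ i, ‖f i‖ ^ 2) := by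
    have h := Finset.sum_mul_sq_le_sq_mul_sq Finset.univ (fun i => |c i|) (fun i => ‖f i‖)
    simpa [sq_abs] using h
  have hnn : (0:ℝ) ≤ ∑ i, |c i| * ‖f i‖ :=
    Finset.sum_nonneg fun i _ => mul_nonneg (abs_nonneg _) (norm_nonneg _)
  have hprod : (0:ℝ) ≤ (∑ i, c i ^ 2) * (∑ i, ‖f i‖ ^ 2) :=
    mul_nonneg (Finset.sum_nonneg fun i _ => sq_nonneg _) (Finset.sum_nonneg fun i _ => sq_nonneg _)
  calc ‖∑ i, c i • f i‖ ≤ ∑ i, |c i| * ‖f i‖ := h1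
    _ ≤ Real.sqrt ((∑ i, c i ^ 2) * (∑ i, ‖f i‖ ^ 2)) := by
        nlinarith [Real.sq_sqrt hprod, Real.sqrt_nonneg ((∑ i, c i ^ 2) * (∑ i, ‖f i‖ ^ 2))]
    _ = _ := Real.sqrt_mul (Finset.sum_nonneg fun i _ => sq_nonneg _) _

lemma aux_integral_sq {E : Type*} [MeasurableSpace E] (μ : Measure E) [IsProbabilityMeasure μ]
    {N : ℕ} (v : Fin N → E → ℝ) (hmeas : ∀ i, AEStronglyMeasurable (v i) μ)
    (hL2 : ∀ i, MemLp (v i) 2 μ)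
    (horth : ∀ i j, ∫ x, v i x * v j x ∂μ = if i = j then 1 else 0)
    (c : Fin N → ℝ) :
    ∫ x, (∑ i, c i * v i x) ^ 2 ∂μ = ∑ i, c i ^ 2 := by
  have hmul : ∀ i j, Integrable (fun x => v i x * v j x) μ := by
    intro i j
    refine Integrable.mono' (((hL2 i).integrable_sq.add (hL2 j).integrable_sq).div_const 2)
      ((hmeas i).mul (hmeas j)) (ae_of_all _ fun x => ?_)
    rw [Real.norm_eq_abs, abs_mul]
    show |v i x| * |v j x| ≤ (v i x ^ 2 + v j x ^ 2) / 2
    nlinarith [sq_nonneg (|v i x| - |v j x|), sq_abs (v i x), sq_abs (v j x)]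
  have key : ∀ x, (∑ i, c i * v i x) ^ 2 = ∑ i, ∑ j, (c i * c j) * (v i x * v j x) := by
    intro x; rw [sq, Finset.sum_mul_sum]
    exact Finset.sum_congr rfl fun i _ => Finset.sum_congr rfl fun j _ => by ring
  calc ∫ x, (∑ i, c i * v i x) ^ 2 ∂μ
      = ∫ x, ∑ i, ∑ j, (c i * c j) * (v i x * v j x) ∂μ := by simp_rw [key]
    _ = ∑ i, ∑ j, (c i * c j) * ∫ x, v i x * v j x ∂μ := by
        rw [integral_finset_sum _ (fun i _ =>
          integrable_finset_sum _ (fun j _ => (hmul i j).const_mul _))]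
        refine Finset.sum_congr rfl fun i _ => ?_
        rw [integral_finset_sum _ fun j _ => (hmul i j).const_mul _]
        exact Finset.sum_congr rfl fun j _ => integral_const_mul _ _
    _ = ∑ i, c i ^ 2 := by
        simp [horth, mul_ite, Finset.sum_ite_eq, sq]

set_option maxHeartbeats 1000000 in
theorem stmt19 {d N M : ℕ} {Ω : Type*} [MeasurableSpace Ω]
    (P : Measure Ω) [IsProbabilityMeasure P]
    (μ : Measure (EuclideanSpace ℝ (Fin d))) [IsProbabilityMeasure μ]
    (D : Set (EuclideanSpace ℝ (Fin d)))
    (hDcompact : IsCompact D) (hDconv : Convex ℝ D) (hDint : (interior D).Nonempty)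
    (hDsupp : μ Dᶜ = 0)
    (v : Fin N → EuclideanSpace ℝ (Fin d) → ℝ)
    (hC2 : ∀ i, ContDiff ℝ 2 (v i))
    (hL2 : ∀ i, MemLp (v i) 2 μ)
    (horth : ∀ i j, ∫ x, v i x * v j x ∂μ = if i = j then 1 else 0)
    (RV : ℝ)
    (hRV : IsLUB ((fun x => Real.sqrt (∑ i, ‖fderiv ℝ (v i) x‖ ^ 2)) '' D) RV)
    (k r : ℝ) (hk : 2 < k) (hr : 1 < r)
    (η : ℝ) (hη : η = (k * RV)⁻¹)
    (𝒩 : Finset (EuclideanSpace ℝ (Fin d))) (h𝒩D : ↑𝒩 ⊆ D)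
    (h𝒩cover : D ⊆ ⋃ y ∈ 𝒩, closedBall y η)
    (h𝒩card : N ≤ 𝒩.card)
    (α : ℝ) (hα : 0 < α)
    (hdens : ∀ x ∈ D, ∀ s : ℝ, 0 < s → s ≤ η →
      ENNReal.ofReal α * volume (closedBall x s) ≤ volume (closedBall x s ∩ D))
    (hM : (M : ℝ) ≥ α⁻¹ * (r + 1) * 𝒩.card * Real.log 𝒩.card)
    (X : Fin M → Ω → EuclideanSpace ℝ (Fin d))
    (hXmeas : ∀ m, Measurable (X m))
    (hXindep : iIndepFun X P)
    (hXdist : ∀ m, P.map (X m) = (volume D)⁻¹ • volume.restrict D) :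
    ENNReal.ofReal (1 - (N : ℝ) ^ (-r)) ≤
      P {ω | ∀ c : Fin N → ℝ,
        (⨆ x ∈ D, |∑ i, c i * v i x|) ≤
          (k / (k - 2)) * ⨆ m : Fin M, |∑ i, c i * v i (X m ω)|} := by
  classical
  have hkpos : (0:ℝ) < k := lt_trans two_pos hk
  have hk2 : (0:ℝ) < k - 2 := by linarith
  rcases Nat.lt_or_ge N 2 with hN | hN
  · interval_cases N
    · -- N = 0
      have hset : {ω | ∀ c : Fin 0 → ℝ,
          (⨆ x ∈ D, |∑ i, c i * v i x|) ≤
            (k / (k - 2)) * ⨆ m : Fin M, |∑ i, c i * v i (X m ω)|} = Set.univ := by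
        ext ω
        simp only [Set.mem_setOf_eq, Set.mem_univ, iff_true]
        intro c
        simp only [Finset.univ_eq_empty, Finset.sum_empty, abs_zero]
        refine Real.iSup_le (fun x => Real.iSup_le (fun _ => ?_) ?_) ?_
        · exact mul_nonneg (div_nonneg hkpos.le hk2.le) (Real.iSup_nonneg fun _ => le_rfl)
        · exact mul_nonneg (div_nonneg hkpos.le hk2.le) (Real.iSup_nonneg fun _ => le_rfl)
        · exact mul_nonneg (div_nonneg hkpos.le hk2.le) (Real.iSup_nonneg fun _ => le_rfl)
      rw [hset, measure_univ]
      have h0 : (0:ℝ) ≤ ((0:ℕ):ℝ) ^ (-r) := Real.rpow_nonneg (by norm_num) _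
      exact ENNReal.ofReal_le_one.2 (by linarith)
    · -- N = 1
      have : ((1:ℕ) : ℝ) ^ (-r) = 1 := by rw [Nat.cast_one, Real.one_rpow]
      rw [this]
      simp
  · -- main case : 2 ≤ N
    have hDne : D.Nonempty := hDint.mono interior_subset
    obtain ⟨x₀, hx₀D⟩ := hDne
    have hvcont : ∀ i, Continuous (v i) := fun i => (hC2 i).continuous
    have hvdiff : ∀ i, Differentiable ℝ (v i) := fun i => (hC2 i).differentiable (by norm_num)
    have hRV0 : 0 ≤ RV :=
      le_trans (Real.sqrt_nonneg _) (hRV.1 (Set.mem_image_of_mem _ hx₀D))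
    have haeD : ∀ᵐ x ∂μ, x ∈ D := by
      rw [MeasureTheory.ae_iff]
      exact hDsupp
    have hRVpos : 0 < RV := by
      rcases hRV0.lt_or_eq with h | h
      · exact h
      exfalso
      have hzero : ∀ i, ∀ x ∈ D, fderiv ℝ (v i) x = 0 := by
        intro i x hx
        have h1 : Real.sqrt (∑ j, ‖fderiv ℝ (v j) x‖ ^ 2) ≤ 0 :=
          h ▸ hRV.1 (Set.mem_image_of_mem _ hx)
        have h2 : (∑ j, ‖fderiv ℝ (v j) x‖ ^ 2) = 0 := by
          have h3 : (0:ℝ) ≤ ∑ j, ‖fderiv ℝ (v j) x‖ ^ 2 :=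
            Finset.sum_nonneg fun j _ => sq_nonneg _
          have h4 := Real.sqrt_eq_zero'.1 (le_antisymm h1 (Real.sqrt_nonneg _))
          linarith
        have h5 : ‖fderiv ℝ (v i) x‖ ^ 2 = 0 := by
          have := (Finset.sum_eq_zero_iff_of_nonneg (fun j _ => sq_nonneg ‖fderiv ℝ (v j) x‖)).1 h2
          exact this i (Finset.mem_univ i)
        simpa using h5
      have hconst : ∀ i, ∀ x ∈ D, v i x = v i x₀ := by
        intro i x hx
        have := hDconv.norm_image_sub_le_of_norm_fderiv_le
          (f := v i) (C := 0) (fun z hz => hvdiff i z)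
          (fun z hz => by rw [hzero i z hz]; simp) hx₀D hx
        simp only [zero_mul, Real.norm_eq_abs] at this
        have := abs_nonpos_iff.1 (le_trans this le_rfl)
        linarith [abs_nonneg (v i x - v i x₀), this]
      have hintc : ∀ i j, ∫ x, v i x * v j x ∂μ = v i x₀ * v j x₀ := by
        intro i j
        have hcong : (fun x => v i x * v j x) =ᵐ[μ] fun _ => v i x₀ * v j x₀ :=
          haeD.mono fun x hx => by simp only []; rw [hconst i x hx, hconst j x hx]
        rw [integral_congr_ae hcong, integral_const]
        simp
      set i0 : Fin N := ⟨0, by omega⟩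
      set i1 : Fin N := ⟨1, by omega⟩
      have e00 : v i0 x₀ * v i0 x₀ = 1 := by
        have := (hintc i0 i0).symm.trans (horth i0 i0); simpa using this
      have e11 : v i1 x₀ * v i1 x₀ = 1 := by
        have := (hintc i1 i1).symm.trans (horth i1 i1); simpa using this
      have e01 : v i0 x₀ * v i1 x₀ = 0 := by
        have h01 : i0 ≠ i1 := by simp [i0, i1, Fin.ext_iff]
        have := (hintc i0 i1).symm.trans (horth i0 i1)
        rw [if_neg h01] at this; exact this
      nlinarith [e00, e11, e01]
    have hηpos : 0 < η := by rw [hη]; positivity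
    -- geometry
    set B0 : ℝ≥0∞ := volume (closedBall (0 : EuclideanSpace ℝ (Fin d)) η) with hB0
    have hBeq : ∀ y : EuclideanSpace ℝ (Fin d), volume (closedBall y η) = B0 :=
      fun y => Measure.addHaar_closedBall_center _ y η
    have hB0pos : 0 < B0 := by
      rw [hB0]
      exact measure_closedBall_pos _ _ hηpos
    have hB0lt : B0 < ∞ := by rw [hB0]; exact measure_closedBall_lt_top
    have hDpos : 0 < volume D := hDcompact.isClosed.measurableSet |> fun _ => (IsOpen.measure_pos volume isOpen_interior hDint).trans_le (measure_mono interior_subset)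
    have hDlt : volume D < ∞ := hDcompact.measure_lt_top
    have hDle : volume D ≤ 𝒩.card * B0 := by
      calc volume D ≤ volume (⋃ y ∈ 𝒩, closedBall y η) := measure_mono h𝒩cover
        _ ≤ ∑ y ∈ 𝒩, volume (closedBall y η) := measure_biUnion_finset_le _ _
        _ = 𝒩.card * B0 := by simp [hBeq, Finset.sum_const, nsmul_eq_mul]
    have hcard2 : 2 ≤ 𝒩.card := le_trans hN h𝒩card
    have hcardposR : (0:ℝ) < 𝒩.card := by exact_mod_cast lt_of_lt_of_le two_pos hcard2
    have hα1 : α ≤ 1 := by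
      have h1 := hdens x₀ hx₀D η hηpos le_rfl
      have h2 : volume (closedBall x₀ η ∩ D) ≤ 1 * volume (closedBall x₀ η) := by
        rw [one_mul]; exact measure_mono Set.inter_subset_left
      have h3 : ENNReal.ofReal α * volume (closedBall x₀ η) ≤ 1 * volume (closedBall x₀ η) :=
        le_trans h1 h2
      have h4 : ENNReal.ofReal α ≤ 1 := by
        have hb0 : volume (closedBall x₀ η) ≠ 0 := by rw [hBeq]; exact hB0pos.ne'
        have hbt : volume (closedBall x₀ η) ≠ ∞ := by rw [hBeq]; exact hB0lt.ne
        exact (ENNReal.mul_le_mul_iff_left hb0 hbt).1 h3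
      exact ENNReal.ofReal_le_one.1 h4
    -- the sampling measure
    set ν : Measure (EuclideanSpace ℝ (Fin d)) := (volume D)⁻¹ • volume.restrict D with hν
    set Sy : EuclideanSpace ℝ (Fin d) → Set (EuclideanSpace ℝ (Fin d)) :=
      fun y => closedBall y η ∩ D with hSy
    have hSymeas : ∀ y, MeasurableSet (Sy y) :=
      fun y => measurableSet_closedBall.inter hDcompact.isClosed.measurableSet
    have hcard0 : (𝒩.card : ℝ≥0∞) ≠ 0 := Nat.cast_ne_zero.2 (by omega)
    have hcardtop : (𝒩.card : ℝ≥0∞) ≠ ∞ := ENNReal.natCast_ne_top _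
    have hνkey : ∀ y, ν (Sy y) = (volume D)⁻¹ * volume (closedBall y η ∩ D) := by
      intro y
      rw [hν, Measure.smul_apply, Measure.restrict_apply (hSymeas y), smul_eq_mul]
      congr 1
      rw [hSy]
      simp [Set.inter_assoc]
    have hνS : ∀ y ∈ 𝒩, ENNReal.ofReal (α / 𝒩.card) ≤ ν (Sy y) := by
      intro y hy
      have hd := hdens y (h𝒩D hy) η hηpos le_rfl
      rw [hBeq y] at hd
      have e1 : ((𝒩.card : ℝ≥0∞) * B0)⁻¹ = (𝒩.card : ℝ≥0∞)⁻¹ * B0⁻¹ :=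
        ENNReal.mul_inv (Or.inl hcard0) (Or.inl hcardtop)
      have e2 : ((𝒩.card : ℝ≥0∞) * B0)⁻¹ * (ENNReal.ofReal α * B0)
          = ENNReal.ofReal α * (𝒩.card : ℝ≥0∞)⁻¹ := by
        rw [e1]
        calc (𝒩.card : ℝ≥0∞)⁻¹ * B0⁻¹ * (ENNReal.ofReal α * B0)
            = ENNReal.ofReal α * (𝒩.card : ℝ≥0∞)⁻¹ * (B0⁻¹ * B0) := by ring
          _ = ENNReal.ofReal α * (𝒩.card : ℝ≥0∞)⁻¹ := by
              rw [ENNReal.inv_mul_cancel hB0pos.ne' hB0lt.ne, mul_one]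
      rw [hνkey y]
      calc ENNReal.ofReal (α / 𝒩.card)
          = ENNReal.ofReal α * (𝒩.card : ℝ≥0∞)⁻¹ := by
            rw [ENNReal.ofReal_div_of_pos hcardposR, div_eq_mul_inv, ENNReal.ofReal_natCast]
        _ = ((𝒩.card : ℝ≥0∞) * B0)⁻¹ * (ENNReal.ofReal α * B0) := e2.symm
        _ ≤ (volume D)⁻¹ * (ENNReal.ofReal α * B0) :=
            mul_le_mul_left (ENNReal.inv_le_inv' hDle) _
        _ ≤ (volume D)⁻¹ * volume (closedBall y η ∩ D) := mul_le_mul_right hd _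
    have hνS1 : ∀ y, ν (Sy y) ≤ 1 := by
      intro y
      rw [hνkey y]
      calc (volume D)⁻¹ * volume (closedBall y η ∩ D)
          ≤ (volume D)⁻¹ * volume D := mul_le_mul_right (measure_mono Set.inter_subset_right) _
        _ = 1 := ENNReal.inv_mul_cancel hDpos.ne' hDlt.ne
    set aR : ℝ := α / 𝒩.card with haR
    have haRpos : 0 < aR := div_pos hα hcardposR
    have hone_le_card : (1:ℝ) ≤ 𝒩.card := by exact_mod_cast (by omega : 1 ≤ 𝒩.card)
    have haR1 : aR ≤ 1 := le_trans (div_le_self hα.le hone_le_card) hα1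
    have hνSc : ∀ y ∈ 𝒩, ν ((Sy y)ᶜ) ≤ ENNReal.ofReal (1 - aR) := by
      intro y hy
      have hν1 : ν Set.univ = 1 := by
        rw [hν, Measure.smul_apply, Measure.restrict_apply MeasurableSet.univ,
          Set.univ_inter, smul_eq_mul]
        exact ENNReal.inv_mul_cancel hDpos.ne' hDlt.ne
      have h1 : ν ((Sy y)ᶜ) = ν Set.univ - ν (Sy y) :=
        measure_compl (hSymeas y) (lt_of_le_of_lt (hνS1 y) ENNReal.one_lt_top).ne
      rw [h1, hν1]
      calc 1 - ν (Sy y) ≤ 1 - ENNReal.ofReal aR := tsub_le_tsub_left (hνS y hy) 1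
        _ = ENNReal.ofReal (1 - aR) := by
            rw [ENNReal.ofReal_sub _ haRpos.le, ENNReal.ofReal_one]
    have hPBad : ∀ y ∈ 𝒩,
        P (⋂ m, X m ⁻¹' (Sy y)ᶜ) ≤ ENNReal.ofReal ((𝒩.card:ℝ) ^ (-(r+1))) := by
      intro y hy
      have h1 : P (⋂ m, X m ⁻¹' (Sy y)ᶜ) = ∏ m : Fin M, P (X m ⁻¹' (Sy y)ᶜ) := by
        have h := hXindep.measure_inter_preimage_eq_mul Finset.univ
          (sets := fun _ => (Sy y)ᶜ) (fun i _ => (hSymeas y).compl)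
        rw [← h]
        congr 1
        simp
      have h2 : ∀ m : Fin M, P (X m ⁻¹' (Sy y)ᶜ) = ν ((Sy y)ᶜ) := fun m => by
        rw [← Measure.map_apply (hXmeas m) (hSymeas y).compl, hXdist m, hν]
      have hreal : (1 - aR) ^ M ≤ (𝒩.card:ℝ) ^ (-(r+1)) := by
        have hstep1 : (1 - aR) ^ M ≤ Real.exp (-aR) ^ M :=
          pow_le_pow_left₀ (by linarith) (by linarith [Real.add_one_le_exp (-aR)]) M
        have hstep2 : Real.exp (-aR) ^ M = Real.exp ((M:ℝ) * -aR) := (Real.exp_nat_mul _ M).symm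
        have hstep3 : (r + 1) * Real.log 𝒩.card ≤ aR * M := by
          have heq : aR * (α⁻¹ * (r + 1) * 𝒩.card * Real.log 𝒩.card)
              = (r + 1) * Real.log 𝒩.card := by
            rw [haR]; field_simp
          calc (r + 1) * Real.log 𝒩.card
              = aR * (α⁻¹ * (r + 1) * 𝒩.card * Real.log 𝒩.card) := heq.symm
            _ ≤ aR * M := mul_le_mul_of_nonneg_left hM haRpos.le
        have hstep4 : Real.exp ((M:ℝ) * -aR) ≤ Real.exp (-((r + 1) * Real.log 𝒩.card)) :=
          Real.exp_le_exp.2 (by nlinarith [hstep3])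
        have hstep5 : Real.exp (-((r + 1) * Real.log 𝒩.card)) = (𝒩.card:ℝ) ^ (-(r+1)) := by
          rw [Real.rpow_def_of_pos hcardposR]
          congr 1
          ring
        calc (1 - aR) ^ M ≤ Real.exp (-aR) ^ M := hstep1
          _ = Real.exp ((M:ℝ) * -aR) := hstep2
          _ ≤ Real.exp (-((r + 1) * Real.log 𝒩.card)) := hstep4
          _ = (𝒩.card:ℝ) ^ (-(r+1)) := hstep5
      rw [h1]
      calc ∏ m : Fin M, P (X m ⁻¹' (Sy y)ᶜ)
          ≤ ∏ _m : Fin M, ENNReal.ofReal (1 - aR) :=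
            Finset.prod_le_prod' fun m _ => (h2 m) ▸ hνSc y hy
        _ = ENNReal.ofReal (1 - aR) ^ M := by
            rw [Finset.prod_const, Finset.card_univ, Fintype.card_fin]
        _ = ENNReal.ofReal ((1 - aR) ^ M) := (ENNReal.ofReal_pow (by linarith) M).symm
        _ ≤ ENNReal.ofReal ((𝒩.card:ℝ) ^ (-(r+1))) := ENNReal.ofReal_le_ofReal hreal
    set E : Set Ω := {ω | ∀ y ∈ 𝒩, ∃ m, X m ω ∈ Sy y} with hE
    have hEc : Eᶜ ⊆ ⋃ y ∈ 𝒩, ⋂ m, X m ⁻¹' (Sy y)ᶜ := by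
      intro ω hω
      simp only [hE, Set.mem_compl_iff, Set.mem_setOf_eq, not_forall] at hω
      obtain ⟨y, hy, hno⟩ := hω
      push_neg at hno
      simp only [Set.mem_iUnion]
      exact ⟨y, hy, Set.mem_iInter.2 fun m => hno m⟩
    have hNpos : (0:ℝ) < N := by exact_mod_cast (by omega : 0 < N)
    have hPEc : P Eᶜ ≤ ENNReal.ofReal ((N:ℝ) ^ (-r)) := by
      calc P Eᶜ ≤ P (⋃ y ∈ 𝒩, ⋂ m, X m ⁻¹' (Sy y)ᶜ) := measure_mono hEc
        _ ≤ ∑ y ∈ 𝒩, P (⋂ m, X m ⁻¹' (Sy y)ᶜ) := measure_biUnion_finset_le _ _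
        _ ≤ ∑ _y ∈ 𝒩, ENNReal.ofReal ((𝒩.card:ℝ) ^ (-(r+1))) := Finset.sum_le_sum hPBad
        _ = 𝒩.card * ENNReal.ofReal ((𝒩.card:ℝ) ^ (-(r+1))) := by
            rw [Finset.sum_const, nsmul_eq_mul]
        _ = ENNReal.ofReal ((𝒩.card:ℝ) * (𝒩.card:ℝ) ^ (-(r+1))) := by
            rw [ENNReal.ofReal_mul (Nat.cast_nonneg _), ENNReal.ofReal_natCast]
        _ ≤ ENNReal.ofReal ((N:ℝ) ^ (-r)) := by
            apply ENNReal.ofReal_le_ofReal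
            have h1 : (𝒩.card:ℝ) * (𝒩.card:ℝ) ^ (-(r+1)) = (𝒩.card:ℝ) ^ (-r) := by
              nth_rewrite 1 [← Real.rpow_one (𝒩.card:ℝ)]
              rw [← Real.rpow_add hcardposR]
              norm_num
            rw [h1, Real.rpow_neg hcardposR.le, Real.rpow_neg hNpos.le]
            exact inv_anti₀ (Real.rpow_pos_of_pos hNpos r)
              (Real.rpow_le_rpow hNpos.le (by exact_mod_cast h𝒩card) (by linarith))
    have hPE : ENNReal.ofReal (1 - (N:ℝ) ^ (-r)) ≤ P E := by
      have h1 : (1:ℝ≥0∞) ≤ P E + P Eᶜ := by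
        rw [← measure_univ (μ := P), ← Set.union_compl_self E]
        exact measure_union_le _ _
      have h2 : ENNReal.ofReal (1 - (N:ℝ) ^ (-r))
          = ENNReal.ofReal 1 - ENNReal.ofReal ((N:ℝ) ^ (-r)) :=
        ENNReal.ofReal_sub _ (Real.rpow_nonneg hNpos.le _)
      rw [h2, ENNReal.ofReal_one]
      calc 1 - ENNReal.ofReal ((N:ℝ) ^ (-r)) ≤ (P E + P Eᶜ) - P Eᶜ := tsub_le_tsub h1 hPEc
        _ = P E := ENNReal.add_sub_cancel_right (measure_ne_top P _)
    refine le_trans hPE (measure_mono ?_)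
    intro ω hω c
    have hgood : ∀ y ∈ 𝒩, ∃ m, X m ω ∈ Sy y := hω
    set g : EuclideanSpace ℝ (Fin d) → ℝ := fun x => ∑ i, c i * v i x with hg
    have hgcont : Continuous g := continuous_finset_sum _ fun i _ => continuous_const.mul (hvcont i)
    obtain ⟨z, hzD, hzmax⟩ := hDcompact.exists_isMaxOn ⟨x₀, hx₀D⟩ (hgcont.abs.continuousOn)
    set C2 : ℝ := ∑ i, c i ^ 2 with hC2def
    have hintsq : ∫ x, g x ^ 2 ∂μ = C2 :=
      aux_integral_sq μ v (fun i => (hvcont i).aestronglyMeasurable) hL2 horth c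
    have hgL2 : Integrable (fun x => g x ^ 2) μ := by
      have hmem : MemLp g 2 μ := by
        rw [hg]
        exact memLp_finsetSum _ (fun i _ => ((hL2 i).const_mul (c i)))
      exact hmem.integrable_sq
    have hgb : ∫ x, g x ^ 2 ∂μ ≤ (g z) ^ 2 := by
      have hmono : (fun x => g x ^ 2) ≤ᵐ[μ] fun _ => (g z) ^ 2 := haeD.mono fun x hx => by
        have h := hzmax hx
        calc g x ^ 2 = |g x| ^ 2 := (sq_abs _).symm
          _ ≤ |g z| ^ 2 := pow_le_pow_left₀ (abs_nonneg _) h 2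
          _ = (g z) ^ 2 := sq_abs _
      calc ∫ x, g x ^ 2 ∂μ ≤ ∫ _x, (g z) ^ 2 ∂μ := integral_mono_ae hgL2 (integrable_const _) hmono
        _ = (g z) ^ 2 := by simp
    have hsqrt : Real.sqrt C2 ≤ |g z| := by
      rw [← Real.sqrt_sq_eq_abs]
      exact Real.sqrt_le_sqrt (le_trans (le_of_eq hintsq.symm) hgb)
    have hgder : ∀ x, HasFDerivAt g (∑ i, c i • fderiv ℝ (v i) x) x := by
      intro x
      rw [hg]
      exact HasFDerivAt.fun_sum fun i _ => ((hvdiff i x).hasFDerivAt).const_mul (c i)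
    have hgradb : ∀ x ∈ D, ‖fderiv ℝ g x‖ ≤ Real.sqrt C2 * RV := by
      intro x hx
      rw [(hgder x).fderiv]
      calc ‖∑ i, c i • fderiv ℝ (v i) x‖
          ≤ Real.sqrt C2 * Real.sqrt (∑ i, ‖fderiv ℝ (v i) x‖ ^ 2) := aux_cs c _
        _ ≤ Real.sqrt C2 * RV :=
            mul_le_mul_of_nonneg_left (hRV.1 ⟨x, hx, rfl⟩) (Real.sqrt_nonneg _)
    have hlip : ∀ x ∈ D, ∀ a ∈ D, |g x - g a| ≤ Real.sqrt C2 * RV * ‖x - a‖ := by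
      intro x hx a ha
      have h := hDconv.norm_image_sub_le_of_norm_fderiv_le
        (fun w _ => (hgder w).differentiableAt) hgradb ha hx
      simpa [Real.norm_eq_abs] using h
    obtain ⟨y, hy𝒩, hzy⟩ : ∃ y ∈ 𝒩, z ∈ closedBall y η := by
      have := h𝒩cover hzD
      simpa using this
    obtain ⟨m, hm⟩ := hgood y hy𝒩
    have hmS : X m ω ∈ closedBall y η ∩ D := hm
    set A : ℝ := ⨆ m : Fin M, |g (X m ω)| with hA
    have hmA : |g (X m ω)| ≤ A := by
      rw [hA]
      exact le_ciSup (f := fun m : Fin M => |g (X m ω)|) (Set.Finite.bddAbove (Set.finite_range _)) m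
    have hA0 : 0 ≤ A := le_trans (abs_nonneg _) hmA
    have hdist2 : ‖z - X m ω‖ ≤ 2 * η := by
      have h1 : dist z y ≤ η := mem_closedBall.1 hzy
      have h2 : dist (X m ω) y ≤ η := mem_closedBall.1 hmS.1
      calc ‖z - X m ω‖ = dist z (X m ω) := (dist_eq_norm _ _).symm
        _ ≤ dist z y + dist y (X m ω) := dist_triangle _ _ _
        _ ≤ η + η := add_le_add h1 (by rw [dist_comm]; exact h2)
        _ = 2 * η := by ring
    have hmain : |g z| ≤ A + 2 / k * |g z| := by
      have hL0 : 0 ≤ Real.sqrt C2 * RV := mul_nonneg (Real.sqrt_nonneg _) hRV0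
      have h1 : |g z| - |g (X m ω)| ≤ |g z - g (X m ω)| := abs_sub_abs_le_abs_sub _ _
      have h2 := hlip z hzD (X m ω) hmS.2
      have h3 : Real.sqrt C2 * RV * ‖z - X m ω‖ ≤ Real.sqrt C2 * RV * (2 * η) :=
        mul_le_mul_of_nonneg_left hdist2 hL0
      have h4 : Real.sqrt C2 * RV * (2 * η) = 2 / k * Real.sqrt C2 := by
        rw [hη]
        field_simp
      have h5 : 2 / k * Real.sqrt C2 ≤ 2 / k * |g z| :=
        mul_le_mul_of_nonneg_left hsqrt (by positivity)
      linarith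
    have hfin : |g z| ≤ k / (k - 2) * A := by
      rw [div_mul_eq_mul_div, le_div_iff₀ hk2]
      have h6 := mul_le_mul_of_nonneg_left hmain hkpos.le
      have h7 : k * (A + 2 / k * |g z|) = k * A + 2 * |g z| := by
        field_simp
      nlinarith [h6, h7]
    have final : (⨆ x ∈ D, |g x|) ≤ k / (k - 2) * A := by
      refine Real.iSup_le (fun x => Real.iSup_le (fun hx => ?_) ?_) ?_
      · exact le_trans (hzmax hx) hfin
      · exact mul_nonneg (div_nonneg hkpos.le hk2.le) hA0
      · exact mul_nonneg (div_nonneg hkpos.le hk2.le) hA0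
    simpa only [hA, hg] using final
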